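/- Let a, b ∈ A and let q_a, q_b be quasinilpotent elements of A such that q_a commutes with a and q_b commutes with b. Then ϱ(a,b) = ϱ(a + q_a, b + q_b). -/

import Mathlib

open Filter in
noncomputable def varrho {A : Type*} [NormedRing A] (a b : A) : ℝ :=
  atTop.limsup fun n : ℕ => ‖(fun x => a * x - x * b)^[n] 1‖ ^ ((n : ℝ)⁻¹)

open Filter Finset LinearMap Topology

section helpers

/-- The iterate of `x ↦ a x - x b` is given by the power of the corresponding endomorphism. -/
lemma iter_eq_pow {A : Type*} [NormedRing A] [NormedAlgebra ℂ A] (a b : A) (n : ℕ) :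
    (fun x => a * x - x * b)^[n] (1 : A)
      = ((mulLeft ℂ a - mulRight ℂ b) ^ n) (1 : A) := by
  have hfun : (fun x : A => a * x - x * b) = ⇑(mulLeft ℂ a - mulRight ℂ b) := by
    funext x; simp [LinearMap.sub_apply]
  rw [hfun, Module.End.pow_apply]

lemma commute_F {A : Type*} [NormedRing A] [NormedAlgebra ℂ A] {a b qa qb : A}
    (hca : a * qa = qa * a) (hcb : b * qb = qb * b) :
    Commute (mulLeft ℂ a - mulRight ℂ b) (mulLeft ℂ qa - mulRight ℂ qb) := by
  have h1 : Commute (mulLeft ℂ a) (mulLeft ℂ qa) := by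
    apply LinearMap.ext
    intro x
    simp only [Module.End.mul_apply, mulLeft_apply, ← mul_assoc, hca]
  have h2 : Commute (mulRight ℂ b) (mulRight ℂ qb) := by
    apply LinearMap.ext
    intro x
    simp only [Module.End.mul_apply, mulRight_apply, mul_assoc, hcb]
  exact ((h1.sub_right (commute_mulLeft_right a qb)).sub_left
    (((commute_mulLeft_right qa b).symm).sub_right h2))

/-- Norm bound for powers of `mulLeft qa - mulRight qb`. -/
lemma H_pow_norm_le {A : Type*} [NormedRing A] [NormedAlgebra ℂ A] (qa qb : A)
    {Ma Mb ε : ℝ} (hMa : 0 ≤ Ma) (hMb : 0 ≤ Mb) (hε : 0 ≤ ε)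
    (ha : ∀ n, ‖qa ^ n‖ ≤ Ma * ε ^ n) (hb : ∀ n, ‖qb ^ n‖ ≤ Mb * ε ^ n)
    (m : ℕ) (y : A) :
    ‖((mulLeft ℂ qa - mulRight ℂ qb) ^ m) y‖ ≤ Ma * Mb * (ε + ε) ^ m * ‖y‖ := by
  have hcomm : Commute (mulLeft ℂ qa) (-(mulRight ℂ qb)) :=
    (commute_mulLeft_right qa qb).neg_right
  have hsub : mulLeft ℂ qa - mulRight ℂ qb = mulLeft ℂ qa + -(mulRight ℂ qb) := by
    rw [sub_eq_add_neg]
  rw [hsub, hcomm.add_pow]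
  rw [LinearMap.sum_apply]
  calc ‖∑ j ∈ range (m + 1),
        ((mulLeft ℂ qa ^ j * (-(mulRight ℂ qb)) ^ (m - j) * (m.choose j : Module.End ℂ A)) y)‖
      ≤ ∑ j ∈ range (m + 1),
        ‖(mulLeft ℂ qa ^ j * (-(mulRight ℂ qb)) ^ (m - j) * (m.choose j : Module.End ℂ A)) y‖ :=
        norm_sum_le _ _
    _ ≤ ∑ j ∈ range (m + 1), (Ma * ε ^ j) * ((Mb * ε ^ (m - j)) * ‖y‖) * (m.choose j) := by
        apply Finset.sum_le_sum
        intro j hj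
        have hterm : (mulLeft ℂ qa ^ j * (-(mulRight ℂ qb)) ^ (m - j)
            * (m.choose j : Module.End ℂ A)) y
            = (m.choose j) • ((mulLeft ℂ qa ^ j) (((-(mulRight ℂ qb)) ^ (m - j)) y)) := by
          rw [Module.End.mul_apply, Module.End.mul_apply, Module.End.natCast_apply, map_nsmul,
            map_nsmul]
        rw [hterm]
        have hneg : ((-(mulRight ℂ qb)) ^ (m - j)) y
            = ((-1 : ℂ) ^ (m - j)) • ((mulRight ℂ qb ^ (m - j)) y) := by
          have : (-(mulRight ℂ qb)) = ((-1 : ℂ) • (mulRight ℂ qb)) := by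
            rw [neg_one_smul]
          rw [this, smul_pow, LinearMap.smul_apply]
        have hnorm1 : ‖((mulLeft ℂ qa ^ j) (((-(mulRight ℂ qb)) ^ (m - j)) y))‖
            ≤ (Ma * ε ^ j) * ((Mb * ε ^ (m - j)) * ‖y‖) := by
          rw [hneg, map_smul, pow_mulLeft, pow_mulRight, mulLeft_apply, mulRight_apply]
          rw [norm_smul]
          have h1 : ‖(-1 : ℂ) ^ (m - j)‖ = 1 := by
            rw [norm_pow, norm_neg, norm_one, one_pow]
          rw [h1, one_mul]
          calc ‖qa ^ j * (y * qb ^ (m - j))‖ ≤ ‖qa ^ j‖ * ‖y * qb ^ (m - j)‖ := norm_mul_le _ _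
            _ ≤ ‖qa ^ j‖ * (‖y‖ * ‖qb ^ (m - j)‖) :=
                mul_le_mul_of_nonneg_left (norm_mul_le _ _) (norm_nonneg _)
            _ ≤ (Ma * ε ^ j) * ((Mb * ε ^ (m - j)) * ‖y‖) := by
                rw [mul_comm (‖y‖)]
                gcongr <;> first
                  | exact ha j
                  | exact hb (m - j)
                  | positivity
                  | exact norm_nonneg _
        calc ‖(m.choose j) • ((mulLeft ℂ qa ^ j) (((-(mulRight ℂ qb)) ^ (m - j)) y))‖
            ≤ (m.choose j) * ‖(mulLeft ℂ qa ^ j) (((-(mulRight ℂ qb)) ^ (m - j)) y)‖ :=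
              norm_nsmul_le
          _ ≤ (m.choose j) * ((Ma * ε ^ j) * ((Mb * ε ^ (m - j)) * ‖y‖)) :=
              mul_le_mul_of_nonneg_left hnorm1 (Nat.cast_nonneg _)
          _ = (Ma * ε ^ j) * ((Mb * ε ^ (m - j)) * ‖y‖) * (m.choose j) := by ring
    _ = Ma * Mb * (ε + ε) ^ m * ‖y‖ := by
        rw [add_pow ε ε m, Finset.mul_sum, Finset.sum_mul]
        apply Finset.sum_congr rfl
        intro j hj
        ring

end helpers

lemma growth_of_eventually {s : ℕ → ℝ} (hs : ∀ n, 0 ≤ s n) {ε : ℝ} (hε : 0 < ε)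
    (h : ∀ᶠ n : ℕ in atTop, s n ^ ((n : ℝ)⁻¹) ≤ ε) :
    ∃ M : ℝ, 1 ≤ M ∧ ∀ n, s n ≤ M * ε ^ n := by
  obtain ⟨N, hN⟩ := eventually_atTop.mp h
  have hsum : 0 ≤ ∑ k ∈ Finset.range (N + 1), s k / ε ^ k :=
    Finset.sum_nonneg fun k _ => div_nonneg (hs k) (by positivity)
  refine ⟨1 + ∑ k ∈ Finset.range (N + 1), s k / ε ^ k, by linarith, ?_⟩
  intro n
  by_cases hn : n ≤ N
  · have hmem : n ∈ Finset.range (N + 1) := Finset.mem_range.mpr (Nat.lt_succ_of_le hn)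
    have h1 : s n / ε ^ n ≤ ∑ k ∈ Finset.range (N + 1), s k / ε ^ k :=
      Finset.single_le_sum (fun k _ => div_nonneg (hs k) (by positivity)) hmem
    have h2 : s n / ε ^ n ≤ 1 + ∑ k ∈ Finset.range (N + 1), s k / ε ^ k := by linarith
    calc s n = (s n / ε ^ n) * ε ^ n := by field_simp
      _ ≤ (1 + ∑ k ∈ Finset.range (N + 1), s k / ε ^ k) * ε ^ n :=
          mul_le_mul_of_nonneg_right h2 (by positivity)
  · push_neg at hn
    have hn1 : n ≠ 0 := by omega
    have key : s n ≤ ε ^ n := by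
      have h3 := hN n (by omega)
      calc s n = (s n ^ ((n : ℝ)⁻¹)) ^ n := (Real.rpow_inv_natCast_pow (hs n) hn1).symm
        _ ≤ ε ^ n := pow_le_pow_left₀ (Real.rpow_nonneg (hs n) _) h3 n
    calc s n ≤ ε ^ n := key
      _ ≤ (1 + ∑ k ∈ Finset.range (N + 1), s k / ε ^ k) * ε ^ n := by
          nlinarith [pow_nonneg hε.le n]

lemma tendsto_rpow_inv_mul {M c : ℝ} (hM : 1 ≤ M) :
    Tendsto (fun n : ℕ => M ^ ((n : ℝ)⁻¹) * c) atTop (𝓝 c) := by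
  have h0 : Tendsto (fun n : ℕ => ((n : ℝ))⁻¹) atTop (𝓝 0) :=
    tendsto_inv_atTop_zero.comp tendsto_natCast_atTop_atTop
  have hc : ContinuousAt (fun x : ℝ => M ^ x * c) 0 := by
    apply ContinuousAt.mul _ continuousAt_const
    exact Real.continuousAt_const_rpow (by positivity)
  have h2 := hc.tendsto.comp h0
  simpa [Function.comp_def] using h2

lemma ev_rpow_le {s : ℕ → ℝ} (hs : ∀ n, 0 ≤ s n) {M c : ℝ} (hM : 1 ≤ M) (hc : 0 ≤ c)
    (h : ∀ n, s n ≤ M * c ^ n) :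
    ∀ᶠ n : ℕ in atTop, s n ^ ((n : ℝ)⁻¹) ≤ M ^ ((n : ℝ)⁻¹) * c := by
  filter_upwards [eventually_ge_atTop 1] with n hn
  have hn0 : n ≠ 0 := by omega
  calc s n ^ ((n : ℝ)⁻¹) ≤ (M * c ^ n) ^ ((n : ℝ)⁻¹) :=
      Real.rpow_le_rpow (hs n) (h n) (by positivity)
    _ = M ^ ((n : ℝ)⁻¹) * c := by
      rw [Real.mul_rpow (by linarith) (by positivity), Real.pow_rpow_inv_natCast hc hn0]

lemma limsup_rpow_le {s : ℕ → ℝ} (hs : ∀ n, 0 ≤ s n) {M c : ℝ} (hM : 1 ≤ M) (hc : 0 ≤ c)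
    (h : ∀ n, s n ≤ M * c ^ n) :
    atTop.limsup (fun n : ℕ => s n ^ ((n : ℝ)⁻¹)) ≤ c := by
  have hten := tendsto_rpow_inv_mul (c := c) hM
  have hb : IsBoundedUnder (· ≤ ·) atTop (fun n : ℕ => M ^ ((n : ℝ)⁻¹) * c) :=
    hten.isBoundedUnder_le
  have hcb : IsCoboundedUnder (· ≤ ·) atTop (fun n : ℕ => s n ^ ((n : ℝ)⁻¹)) := by
    apply Filter.IsBoundedUnder.isCoboundedUnder_le
      (isBoundedUnder_of ⟨0, fun n => Real.rpow_nonneg (hs n) _⟩)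
  calc atTop.limsup (fun n : ℕ => s n ^ ((n : ℝ)⁻¹))
      ≤ atTop.limsup (fun n : ℕ => M ^ ((n : ℝ)⁻¹) * c) :=
        limsup_le_limsup (ev_rpow_le hs hM hc h) hcb hb
    _ = c := hten.limsup_eq

lemma bdd_rpow {s : ℕ → ℝ} (hs : ∀ n, 0 ≤ s n) {M c : ℝ} (hM : 1 ≤ M) (hc : 0 ≤ c)
    (h : ∀ n, s n ≤ M * c ^ n) :
    IsBoundedUnder (· ≤ ·) atTop (fun n : ℕ => s n ^ ((n : ℝ)⁻¹)) :=
  (tendsto_rpow_inv_mul (c := c) hM).isBoundedUnder_le.mono_le (ev_rpow_le hs hM hc h)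

lemma quasinil_growth {A : Type*} [NormedRing A] [NormedAlgebra ℂ A] [CompleteSpace A]
    {q : A} (hq : spectralRadius ℂ q = 0) {ε : ℝ} (hε : 0 < ε) :
    ∃ M : ℝ, 1 ≤ M ∧ ∀ n, ‖q ^ n‖ ≤ M * ε ^ n := by
  apply growth_of_eventually (fun n => norm_nonneg _) hε
  have h := spectrum.pow_norm_pow_one_div_tendsto_nhds_spectralRadius q
  rw [hq] at h
  have h2 : ∀ᶠ n : ℕ in atTop, ENNReal.ofReal (‖q ^ n‖ ^ (1 / (n : ℝ))) ≤ ENNReal.ofReal ε :=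
    (ENNReal.tendsto_nhds_zero.mp h) (ENNReal.ofReal ε) (by simp [hε])
  filter_upwards [h2] with n hn
  have h3 : ‖q ^ n‖ ^ (1 / (n : ℝ)) ≤ ε := by
    rwa [ENNReal.ofReal_le_ofReal_iff hε.le] at hn
  rwa [one_div] at h3

lemma spectralRadius_neg' {A : Type*} [NormedRing A] [NormedAlgebra ℂ A] (q : A) :
    spectralRadius ℂ (-q) = spectralRadius ℂ q := by
  unfold spectralRadius
  rw [← spectrum.neg_eq]
  apply le_antisymm
  · refine iSup₂_le fun k hk => ?_
    rw [Set.mem_neg] at hk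
    calc (‖k‖₊ : ENNReal) = (‖-k‖₊ : ENNReal) := by rw [nnnorm_neg]
      _ ≤ _ := le_iSup₂ (f := fun k (_ : k ∈ spectrum ℂ q) => (‖k‖₊ : ENNReal)) (-k) hk
  · refine iSup₂_le fun k hk => ?_
    have hk' : -k ∈ -spectrum ℂ q := by rw [Set.mem_neg, neg_neg]; exact hk
    calc (‖k‖₊ : ENNReal) = (‖-k‖₊ : ENNReal) := by rw [nnnorm_neg]
      _ ≤ _ := le_iSup₂ (f := fun k (_ : k ∈ -spectrum ℂ q) => (‖k‖₊ : ENNReal)) (-k) hk'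

lemma varrho_add_le {A : Type*} [NormedRing A] [NormedAlgebra ℂ A] [CompleteSpace A]
    (a b qa qb : A) (hqa : spectralRadius ℂ qa = 0) (hqb : spectralRadius ℂ qb = 0)
    (hca : a * qa = qa * a) (hcb : b * qb = qb * b) :
    varrho (a + qa) (b + qb) ≤ varrho a b := by
  set T := mulLeft ℂ a - mulRight ℂ b with hTdef
  set H := mulLeft ℂ qa - mulRight ℂ qb with hHdef
  have hTH : Commute T H := commute_F hca hcb
  -- crude growth bound for ‖T^n 1‖
  have hTbound : ∀ n, ‖(T ^ n) (1 : A)‖ ≤ max ‖(1 : A)‖ 1 * (‖a‖ + ‖b‖) ^ n := by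
    intro n
    induction n with
    | zero => simpa using le_max_left ‖(1 : A)‖ 1
    | succ n ih =>
      have happ : (T ^ (n + 1)) (1 : A) = a * ((T ^ n) 1) - ((T ^ n) 1) * b := by
        rw [pow_succ', Module.End.mul_apply, hTdef, LinearMap.sub_apply, mulLeft_apply,
          mulRight_apply]
      rw [happ]
      have h1 : ‖a * ((T ^ n) 1) - ((T ^ n) 1) * b‖
          ≤ (‖a‖ + ‖b‖) * ‖(T ^ n) (1 : A)‖ := by
        calc ‖a * ((T ^ n) 1) - ((T ^ n) 1) * b‖
            ≤ ‖a * ((T ^ n) 1)‖ + ‖((T ^ n) 1) * b‖ := norm_sub_le _ _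
          _ ≤ ‖a‖ * ‖(T ^ n) (1:A)‖ + ‖(T ^ n) (1:A)‖ * ‖b‖ :=
              add_le_add (norm_mul_le _ _) (norm_mul_le _ _)
          _ = (‖a‖ + ‖b‖) * ‖(T ^ n) (1:A)‖ := by ring
      calc ‖a * ((T ^ n) 1) - ((T ^ n) 1) * b‖ ≤ (‖a‖ + ‖b‖) * ‖(T ^ n) (1:A)‖ := h1
        _ ≤ (‖a‖ + ‖b‖) * (max ‖(1 : A)‖ 1 * (‖a‖ + ‖b‖) ^ n) :=
            mul_le_mul_of_nonneg_left ih (by positivity)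
        _ = max ‖(1 : A)‖ 1 * (‖a‖ + ‖b‖) ^ (n + 1) := by ring
  set u : ℕ → ℝ := fun n => ‖(T ^ n) (1 : A)‖ ^ ((n : ℝ)⁻¹) with hudef
  have hvr : varrho a b = atTop.limsup u := by
    unfold varrho
    congr 1
    funext n
    rw [iter_eq_pow]
  have hK1 : (1 : ℝ) ≤ max ‖(1 : A)‖ 1 := le_max_right _ _
  have hubdd : IsBoundedUnder (· ≤ ·) atTop u :=
    bdd_rpow (fun n => norm_nonneg _) hK1 (by positivity) hTbound
  have hr0 : 0 ≤ atTop.limsup u :=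
    le_limsup_of_frequently_le
      (Frequently.of_forall fun n => Real.rpow_nonneg (norm_nonneg _) _) hubdd
  rw [hvr]
  refine le_of_forall_pos_le_add fun η hη => ?_
  set r := atTop.limsup u with hrdef
  have hev2 : ∀ᶠ n in atTop, u n < r + η / 2 :=
    eventually_lt_of_limsup_lt (by linarith) hubdd
  have hρpos : (0 : ℝ) < r + η / 2 := by linarith
  obtain ⟨M', hM'1, hM'⟩ := growth_of_eventually (s := fun n => ‖(T ^ n) (1 : A)‖)
    (fun n => norm_nonneg _) hρpos (hev2.mono fun n hn => hn.le)
  obtain ⟨Ma, hMa1, hMa⟩ := quasinil_growth hqa (ε := η / 8) (by linarith)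
  obtain ⟨Mb, hMb1, hMb⟩ := quasinil_growth hqb (ε := η / 8) (by linarith)
  have hMa0 : (0 : ℝ) ≤ Ma := by linarith
  have hMb0 : (0 : ℝ) ≤ Mb := by linarith
  have hε0 : (0 : ℝ) ≤ η / 8 := by linarith
  have key : ∀ n, ‖((T + H) ^ n) (1 : A)‖
      ≤ (Ma * Mb * M') * ((r + η / 2) + (η / 8 + η / 8)) ^ n := by
    intro n
    rw [hTH.add_pow, LinearMap.sum_apply]
    calc ‖∑ k ∈ range (n + 1),
          ((T ^ k * H ^ (n - k) * (n.choose k : Module.End ℂ A)) (1 : A))‖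
        ≤ ∑ k ∈ range (n + 1),
          ‖(T ^ k * H ^ (n - k) * (n.choose k : Module.End ℂ A)) (1 : A)‖ := norm_sum_le _ _
      _ ≤ ∑ k ∈ range (n + 1),
          (Ma * Mb * (η / 8 + η / 8) ^ (n - k) * (M' * (r + η / 2) ^ k)) * (n.choose k) := by
          apply Finset.sum_le_sum
          intro k hk
          have happ : (T ^ k * H ^ (n - k) * ((n.choose k : ℕ) : Module.End ℂ A)) (1 : A)
              = (n.choose k) • ((H ^ (n - k)) ((T ^ k) (1 : A))) := by
            rw [Module.End.mul_apply, Module.End.natCast_apply, map_nsmul,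
              (hTH.pow_pow k (n - k)).eq, Module.End.mul_apply]
          rw [happ]
          calc ‖(n.choose k) • ((H ^ (n - k)) ((T ^ k) (1 : A)))‖
              ≤ (n.choose k) * ‖(H ^ (n - k)) ((T ^ k) (1 : A))‖ := norm_nsmul_le
            _ ≤ (n.choose k) * (Ma * Mb * (η / 8 + η / 8) ^ (n - k) * ‖(T ^ k) (1 : A)‖) :=
                mul_le_mul_of_nonneg_left
                  (H_pow_norm_le qa qb hMa0 hMb0 hε0 hMa hMb (n - k) _) (Nat.cast_nonneg _)
            _ ≤ (n.choose k) * (Ma * Mb * (η / 8 + η / 8) ^ (n - k) * (M' * (r + η / 2) ^ k)) := by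
                apply mul_le_mul_of_nonneg_left _ (Nat.cast_nonneg _)
                apply mul_le_mul_of_nonneg_left (hM' k)
                exact mul_nonneg (mul_nonneg hMa0 hMb0) (by positivity)
            _ = (Ma * Mb * (η / 8 + η / 8) ^ (n - k) * (M' * (r + η / 2) ^ k)) * (n.choose k) := by
                ring
      _ = (Ma * Mb * M') * ((r + η / 2) + (η / 8 + η / 8)) ^ n := by
          rw [add_pow (r + η / 2) (η / 8 + η / 8) n, Finset.mul_sum]
          apply Finset.sum_congr rfl
          intro k hk
          ring
  have hsum_eq : mulLeft ℂ (a + qa) - mulRight ℂ (b + qb) = T + H := by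
    apply LinearMap.ext
    intro x
    simp only [hTdef, hHdef, LinearMap.sub_apply, LinearMap.add_apply, mulLeft_apply,
      mulRight_apply, add_mul, mul_add]
    abel
  have hvr2 : varrho (a + qa) (b + qb)
      = atTop.limsup (fun n : ℕ => ‖((T + H) ^ n) (1 : A)‖ ^ ((n : ℝ)⁻¹)) := by
    unfold varrho
    congr 1
    funext n
    rw [iter_eq_pow, hsum_eq]
  have hMM : (1 : ℝ) ≤ Ma * Mb * M' := by
    have h12 : (1 : ℝ) * 1 ≤ Ma * Mb := mul_le_mul hMa1 hMb1 zero_le_one hMa0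
    have h3 : (1 : ℝ) * 1 ≤ Ma * Mb * M' := mul_le_mul (by linarith) hM'1 zero_le_one (by linarith)
    linarith
  have hfin := limsup_rpow_le (fun n => norm_nonneg _) hMM (by linarith) key
  rw [hvr2]
  calc atTop.limsup (fun n : ℕ => ‖((T + H) ^ n) (1 : A)‖ ^ ((n : ℝ)⁻¹))
      ≤ (r + η / 2) + (η / 8 + η / 8) := hfin
    _ ≤ r + η := by linarith

theorem stmt_2 {A : Type*} [NormedRing A] [NormedAlgebra ℂ A] [CompleteSpace A]
    (a b qa qb : A) (hqa : spectralRadius ℂ qa = 0) (hqb : spectralRadius ℂ qb = 0)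
    (hca : a * qa = qa * a) (hcb : b * qb = qb * b) :
    varrho a b = varrho (a + qa) (b + qb) := by
  have h1 : varrho (a + qa) (b + qb) ≤ varrho a b :=
    varrho_add_le a b qa qb hqa hqb hca hcb
  have h2 : varrho a b ≤ varrho (a + qa) (b + qb) := by
    have hqa' : spectralRadius ℂ (-qa) = 0 := by rw [spectralRadius_neg', hqa]
    have hqb' : spectralRadius ℂ (-qb) = 0 := by rw [spectralRadius_neg', hqb]
    have hca' : (a + qa) * (-qa) = (-qa) * (a + qa) := by
      rw [mul_neg, neg_mul, add_mul, mul_add, hca]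
    have hcb' : (b + qb) * (-qb) = (-qb) * (b + qb) := by
      rw [mul_neg, neg_mul, add_mul, mul_add, hcb]
    have h := varrho_add_le (a + qa) (b + qb) (-qa) (-qb) hqa' hqb' hca' hcb'
    simpa using h
  linarith
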